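/- Let Ω be a locally compact, non-compact Hausdorff space, α an aperiodic homeomorphism of Ω, and w a continuous positive function on Ω such that w and w⁻¹ = 1/w are bounded, so that T̃_{α,w}(f) = w·(f∘α) is an invertible bounded linear operator on C₀(Ω). Then the following are equivalent: (1) T̃_{α,w} is topologically Cesàro hyper-transitive on C₀(Ω); (2) for every compact subset K of Ω there exists a strictly increasing sequence (n_k) of natural numbers such that lim_{k→∞} ( sup_{t∈K} n_k⁻¹·∏_{j=0}^{n_k−1} w(α^{j−n_k}(t)) ) = 0 = lim_{k→∞} ( sup_{t∈K} n_k·∏_{j=0}^{n_k−1} (w(α^j(t)))⁻¹ ). -/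

import Mathlib

open scoped ZeroAtInfty
open Filter Finset

/-- A bounded linear operator `T` on a complex normed space is *topologically Cesàro
hyper-transitive* if for every pair of nonempty open subsets `O₁, O₂` there exists a
strictly increasing sequence `(n_k)` of (positive) natural numbers such that
`n_k⁻¹ • T^{n_k}(O₁) ∩ O₂ ≠ ∅` for all `k`. -/
def IsCesaroHyperTransitive {E : Type*} [NormedAddCommGroup E] [NormedSpace ℂ E]
    (T : E →L[ℂ] E) : Prop :=
  ∀ O₁ O₂ : Set E, IsOpen O₁ → IsOpen O₂ → O₁.Nonempty → O₂.Nonempty →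
    ∃ n : ℕ → ℕ, StrictMono n ∧ (∀ k, 1 ≤ n k) ∧
      ∀ k, ∃ f ∈ O₁, ((n k : ℂ))⁻¹ • (T ^ n k) f ∈ O₂

namespace CesaroAux

variable {Ω : Type*} [TopologicalSpace Ω]

lemma iter_symm_apply (α : Ω ≃ₜ Ω) (n : ℕ) (x : Ω) : (⇑α)^[n] ((⇑α.symm)^[n] x) = x :=
  (Function.LeftInverse.iterate (fun y => α.apply_symm_apply y) n) x

lemma symm_iter_apply (α : Ω ≃ₜ Ω) (n : ℕ) (x : Ω) : (⇑α.symm)^[n] ((⇑α)^[n] x) = x :=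
  (Function.LeftInverse.iterate (fun y => α.symm_apply_apply y) n) x

lemma iter_comp (α : Ω ≃ₜ Ω) {j n : ℕ} (h : j ≤ n) (x : Ω) :
    (⇑α)^[j] ((⇑α.symm)^[n] x) = (⇑α.symm)^[n - j] x := by
  conv_lhs => rw [show n = j + (n - j) from (Nat.add_sub_cancel' h).symm,
    Function.iterate_add_apply]
  exact iter_symm_apply α j _

lemma symm_iter_comp (α : Ω ≃ₜ Ω) {m n : ℕ} (h : m ≤ n) (x : Ω) :
    (⇑α.symm)^[m] ((⇑α)^[n] x) = (⇑α)^[n - m] x := by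
  conv_lhs => rw [show n = m + (n - m) from (Nat.add_sub_cancel' h).symm,
    Function.iterate_add_apply]
  exact symm_iter_apply α m _

lemma Tpow (w : Ω → ℝ) (α : Ω ≃ₜ Ω) (T : C₀(Ω, ℂ) →L[ℂ] C₀(Ω, ℂ))
    (hT : ∀ (f : C₀(Ω, ℂ)) (t : Ω), T f t = (w t : ℂ) * f (α t)) :
    ∀ (n : ℕ) (f : C₀(Ω, ℂ)) (t : Ω),
      (T ^ n) f t = ((∏ j ∈ range n, w ((⇑α)^[j] t) : ℝ) : ℂ) * f ((⇑α)^[n] t) := by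
  intro n
  induction n with
  | zero => intro f t; simp
  | succ n ih =>
    intro f t
    rw [pow_succ, ContinuousLinearMap.mul_apply, ih, hT, prod_range_succ,
      Function.iterate_succ_apply']
    push_cast
    ring

lemma Sapp (w : Ω → ℝ) (α : Ω ≃ₜ Ω) (hw_pos : ∀ t, 0 < w t)
    (T S : C₀(Ω, ℂ) →L[ℂ] C₀(Ω, ℂ))
    (hT : ∀ (f : C₀(Ω, ℂ)) (t : Ω), T f t = (w t : ℂ) * f (α t))
    (hTS : ∀ f, T (S f) = f) (f : C₀(Ω, ℂ)) (t : Ω) :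
    S f t = (((w (α.symm t))⁻¹ : ℝ) : ℂ) * f (α.symm t) := by
  have h1 : f (α.symm t) = (w (α.symm t) : ℂ) * S f (α (α.symm t)) := by
    conv_lhs => rw [← hTS f]
    exact hT (S f) (α.symm t)
  rw [α.apply_symm_apply] at h1
  have hw : ((w (α.symm t) : ℝ) : ℂ) ≠ 0 := by
    exact_mod_cast (hw_pos (α.symm t)).ne'
  rw [h1]
  push_cast
  field_simp

lemma Spow (w : Ω → ℝ) (α : Ω ≃ₜ Ω) (hw_pos : ∀ t, 0 < w t)
    (T S : C₀(Ω, ℂ) →L[ℂ] C₀(Ω, ℂ))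
    (hT : ∀ (f : C₀(Ω, ℂ)) (t : Ω), T f t = (w t : ℂ) * f (α t))
    (hTS : ∀ f, T (S f) = f) :
    ∀ (n : ℕ) (f : C₀(Ω, ℂ)) (t : Ω),
      (S ^ n) f t = ((∏ j ∈ range n, (w ((⇑α.symm)^[j + 1] t))⁻¹ : ℝ) : ℂ) *
        f ((⇑α.symm)^[n] t) := by
  intro n
  induction n with
  | zero => intro f t; simp
  | succ n ih =>
    intro f t
    rw [pow_succ', ContinuousLinearMap.mul_apply, Sapp w α hw_pos T S hT hTS, ih,
      prod_range_succ']
    simp only [← Function.iterate_succ_apply]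
    push_cast
    simp only [Nat.succ_eq_add_one, Function.iterate_one]
    ring

lemma TSpow (T S : C₀(Ω, ℂ) →L[ℂ] C₀(Ω, ℂ)) (hTS : ∀ f, T (S f) = f) :
    ∀ (n : ℕ) (f : C₀(Ω, ℂ)), (T ^ n) ((S ^ n) f) = f := by
  intro n
  induction n with
  | zero => intro f; simp
  | succ n ih =>
    intro f
    rw [pow_succ T, pow_succ' S, ContinuousLinearMap.mul_apply,
      ContinuousLinearMap.mul_apply, hTS, ih]

lemma C0_norm_apply_le (f : C₀(Ω, ℂ)) (t : Ω) : ‖f t‖ ≤ ‖f‖ := by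
  rw [← ZeroAtInftyContinuousMap.norm_toBCF_eq_norm]
  exact BoundedContinuousFunction.norm_coe_le_norm f.toBCF t

lemma C0_norm_le {f : C₀(Ω, ℂ)} {C : ℝ} (hC : 0 ≤ C) (h : ∀ t, ‖f t‖ ≤ C) : ‖f‖ ≤ C := by
  rw [← ZeroAtInftyContinuousMap.norm_toBCF_eq_norm]
  exact (BoundedContinuousFunction.norm_le hC).mpr h


noncomputable def Q1 (w : Ω → ℝ) (α : Ω ≃ₜ Ω) (m : ℕ) (t : Ω) : ℝ :=
  ((m : ℝ))⁻¹ * ∏ j ∈ range m, w ((⇑α.symm)^[m - j] t)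

noncomputable def Q2 (w : Ω → ℝ) (α : Ω ≃ₜ Ω) (m : ℕ) (t : Ω) : ℝ :=
  (m : ℝ) * ∏ j ∈ range m, (w ((⇑α)^[j] t))⁻¹

lemma Q1_def (w : Ω → ℝ) (α : Ω ≃ₜ Ω) (m : ℕ) (t : Ω) :
    Q1 w α m t = ((m : ℝ))⁻¹ * ∏ j ∈ range m, w ((⇑α.symm)^[m - j] t) := rfl

lemma Q2_def (w : Ω → ℝ) (α : Ω ≃ₜ Ω) (m : ℕ) (t : Ω) :
    Q2 w α m t = (m : ℝ) * ∏ j ∈ range m, (w ((⇑α)^[j] t))⁻¹ := rfl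

lemma Q1_nonneg (w : Ω → ℝ) (α : Ω ≃ₜ Ω) (hw_pos : ∀ t, 0 < w t) (m : ℕ) (t : Ω) :
    0 ≤ Q1 w α m t :=
  mul_nonneg (by positivity) (Finset.prod_nonneg fun j _ => (hw_pos _).le)

lemma Q2_nonneg (w : Ω → ℝ) (α : Ω ≃ₜ Ω) (hw_pos : ∀ t, 0 < w t) (m : ℕ) (t : Ω) :
    0 ≤ Q2 w α m t :=
  mul_nonneg (by positivity) (Finset.prod_nonneg fun j _ => (inv_pos.mpr (hw_pos _)).le)

lemma Q1_continuous (w : Ω → ℝ) (α : Ω ≃ₜ Ω) (hw_cont : Continuous w) (m : ℕ) :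
    Continuous (Q1 w α m) :=
  continuous_const.mul (continuous_finset_prod _ fun j _ =>
    hw_cont.comp (α.symm.continuous.iterate _))

lemma Q2_continuous (w : Ω → ℝ) (α : Ω ≃ₜ Ω) (hw_cont : Continuous w)
    (hw_pos : ∀ t, 0 < w t) (m : ℕ) : Continuous (Q2 w α m) :=
  continuous_const.mul (continuous_finset_prod _ fun j _ =>
    ((hw_cont.comp (α.continuous.iterate _)).inv₀ fun t => (hw_pos _).ne'))

lemma sSup_Q1_nonneg (w : Ω → ℝ) (α : Ω ≃ₜ Ω) (hw_pos : ∀ t, 0 < w t) (m : ℕ)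
    (K : Set Ω) : 0 ≤ sSup (Q1 w α m '' K) := by
  apply Real.sSup_nonneg
  rintro x ⟨t, ht, rfl⟩
  exact Q1_nonneg w α hw_pos m t

lemma sSup_Q2_nonneg (w : Ω → ℝ) (α : Ω ≃ₜ Ω) (hw_pos : ∀ t, 0 < w t) (m : ℕ)
    (K : Set Ω) : 0 ≤ sSup (Q2 w α m '' K) := by
  apply Real.sSup_nonneg
  rintro x ⟨t, ht, rfl⟩
  exact Q2_nonneg w α hw_pos m t

lemma norm_smul_Spow (w : Ω → ℝ) (α : Ω ≃ₜ Ω) (hw_pos : ∀ t, 0 < w t)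
    (T S : C₀(Ω, ℂ) →L[ℂ] C₀(Ω, ℂ))
    (hT : ∀ (f : C₀(Ω, ℂ)) (t : Ω), T f t = (w t : ℂ) * f (α t))
    (hTS : ∀ f, T (S f) = f) (m : ℕ) (g' : C₀(Ω, ℂ)) (K : Set Ω)
    (hsub : tsupport ⇑g' ⊆ K) (hbdd : BddAbove (Q2 w α m '' K)) :
    ‖((m : ℂ)) • (S ^ m) g'‖ ≤ ‖g'‖ * sSup (Q2 w α m '' K) := by
  have hnn : 0 ≤ sSup (Q2 w α m '' K) := sSup_Q2_nonneg w α hw_pos m K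
  apply C0_norm_le (mul_nonneg (norm_nonneg _) hnn)
  intro t
  rw [ZeroAtInftyContinuousMap.smul_apply, Spow w α hw_pos T S hT hTS]
  set s : Ω := (⇑α.symm)^[m] t with hsdef
  by_cases hs : s ∈ tsupport ⇑g'
  · have hsK : s ∈ K := hsub hs
    have hprodnn : 0 ≤ ∏ j ∈ range m, (w ((⇑α.symm)^[j + 1] t))⁻¹ :=
      Finset.prod_nonneg fun j _ => (inv_pos.mpr (hw_pos _)).le
    have hprod : ∏ j ∈ range m, (w ((⇑α.symm)^[j + 1] t))⁻¹ =
        ∏ j ∈ range m, (w ((⇑α)^[j] s))⁻¹ := by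
      have ht : t = (⇑α)^[m] s := (iter_symm_apply α m t).symm
      rw [← Finset.prod_range_reflect (fun i => (w ((⇑α)^[i] s))⁻¹) m]
      apply Finset.prod_congr rfl
      intro j hj
      have hj' : j + 1 ≤ m := Finset.mem_range.mp hj
      have hsub' : m - (j + 1) = m - 1 - j := by omega
      rw [ht, symm_iter_comp α hj' s, hsub']
    rw [norm_smul, norm_mul, Complex.norm_natCast, Complex.norm_real, Real.norm_eq_abs,
      abs_of_nonneg hprodnn, hprod]
    have hkey : (m : ℝ) * ((∏ j ∈ range m, (w ((⇑α)^[j] s))⁻¹) * ‖g' s‖) =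
        Q2 w α m s * ‖g' s‖ := by
      rw [Q2_def]; ring
    rw [hkey]
    have hle : Q2 w α m s ≤ sSup (Q2 w α m '' K) :=
      le_csSup hbdd (Set.mem_image_of_mem _ hsK)
    calc Q2 w α m s * ‖g' s‖ ≤ sSup (Q2 w α m '' K) * ‖g'‖ :=
          mul_le_mul hle (C0_norm_apply_le g' s) (norm_nonneg _) hnn
      _ = ‖g'‖ * sSup (Q2 w α m '' K) := mul_comm _ _
  · rw [image_eq_zero_of_notMem_tsupport hs, mul_zero, smul_zero, norm_zero]
    exact mul_nonneg (norm_nonneg _) hnn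

lemma norm_inv_Tpow (w : Ω → ℝ) (α : Ω ≃ₜ Ω) (hw_pos : ∀ t, 0 < w t)
    (T : C₀(Ω, ℂ) →L[ℂ] C₀(Ω, ℂ))
    (hT : ∀ (f : C₀(Ω, ℂ)) (t : Ω), T f t = (w t : ℂ) * f (α t))
    (m : ℕ) (f' : C₀(Ω, ℂ)) (K : Set Ω)
    (hsub : tsupport ⇑f' ⊆ K) (hbdd : BddAbove (Q1 w α m '' K)) :
    ‖((m : ℂ))⁻¹ • (T ^ m) f'‖ ≤ ‖f'‖ * sSup (Q1 w α m '' K) := by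
  have hnn : 0 ≤ sSup (Q1 w α m '' K) := sSup_Q1_nonneg w α hw_pos m K
  apply C0_norm_le (mul_nonneg (norm_nonneg _) hnn)
  intro t
  rw [ZeroAtInftyContinuousMap.smul_apply, Tpow w α T hT]
  set s : Ω := (⇑α)^[m] t with hsdef
  by_cases hs : s ∈ tsupport ⇑f'
  · have hsK : s ∈ K := hsub hs
    have hprodnn : 0 ≤ ∏ j ∈ range m, w ((⇑α)^[j] t) :=
      Finset.prod_nonneg fun j _ => (hw_pos _).le
    have hprod : ∏ j ∈ range m, w ((⇑α)^[j] t) =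
        ∏ j ∈ range m, w ((⇑α.symm)^[m - j] s) := by
      have ht : t = (⇑α.symm)^[m] s := (symm_iter_apply α m t).symm
      apply Finset.prod_congr rfl
      intro j hj
      rw [ht, iter_comp α (le_of_lt (Finset.mem_range.mp hj)) s]
    rw [norm_smul, norm_mul, norm_inv, Complex.norm_natCast, Complex.norm_real,
      Real.norm_eq_abs, abs_of_nonneg hprodnn, hprod]
    have hkey : ((m : ℝ))⁻¹ * ((∏ j ∈ range m, w ((⇑α.symm)^[m - j] s)) * ‖f' s‖) =
        Q1 w α m s * ‖f' s‖ := by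
      rw [Q1_def]; ring
    rw [hkey]
    have hle : Q1 w α m s ≤ sSup (Q1 w α m '' K) :=
      le_csSup hbdd (Set.mem_image_of_mem _ hsK)
    calc Q1 w α m s * ‖f' s‖ ≤ sSup (Q1 w α m '' K) * ‖f'‖ :=
          mul_le_mul hle (C0_norm_apply_le f' s) (norm_nonneg _) hnn
      _ = ‖f'‖ * sSup (Q1 w α m '' K) := mul_comm _ _
  · rw [image_eq_zero_of_notMem_tsupport hs, mul_zero, smul_zero, norm_zero]
    exact mul_nonneg (norm_nonneg _) hnn

lemma approx [LocallyCompactSpace Ω] [T2Space Ω] (f : C₀(Ω, ℂ)) {ε : ℝ} (hε : 0 < ε) :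
    ∃ f' : C₀(Ω, ℂ), HasCompactSupport ⇑f' ∧ ‖f - f'‖ ≤ ε := by
  obtain ⟨s, hs, hsub⟩ : ∃ s : Set Ω, IsCompact s ∧ ∀ x ∉ s, ‖f x‖ < ε := by
    have h0 : Tendsto (fun x => ‖f x‖) (cocompact Ω) (nhds 0) := by
      simpa using (zero_at_infty f : Tendsto ⇑f (cocompact Ω) (nhds 0)).norm
    have h2 : ∀ᶠ x in cocompact Ω, ‖f x‖ < ε := h0.eventually_lt_const hε
    rw [Filter.eventually_iff, mem_cocompact] at h2
    obtain ⟨s, hs, hsub⟩ := h2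
    exact ⟨s, hs, fun x hx => hsub hx⟩
  obtain ⟨φ, hφ1, -, hφc, hφ01⟩ :=
    exists_continuous_one_zero_of_isCompact hs isClosed_empty (Set.disjoint_empty s)
  have hcs : HasCompactSupport (fun t : Ω => ((φ t : ℝ) : ℂ) * f t) := by
    have h1 : HasCompactSupport (Complex.ofReal ∘ ⇑φ) :=
      hφc.comp_left (g := Complex.ofReal) (by simp)
    exact h1.mul_right
  refine ⟨⟨⟨fun t => ((φ t : ℝ) : ℂ) * f t, by fun_prop⟩, hcs.is_zero_at_infty⟩, hcs, ?_⟩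
  apply C0_norm_le hε.le
  intro t
  have hval : ‖f t - ((φ t : ℝ) : ℂ) * f t‖ = |1 - φ t| * ‖f t‖ := by
    rw [show f t - ((φ t : ℝ) : ℂ) * f t = ((1 - φ t : ℝ) : ℂ) * f t by push_cast; ring,
      norm_mul, Complex.norm_real, Real.norm_eq_abs]
  have key : ‖f t - ((φ t : ℝ) : ℂ) * f t‖ ≤ ε := by
    rw [hval]
    by_cases ht : t ∈ s
    · rw [hφ1 ht]
      simp [hε.le]
    · have h1 : |1 - φ t| ≤ 1 := by
        have := hφ01 t
        rw [abs_le]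
        constructor <;> [linarith [this.2]; linarith [this.1]]
      calc |1 - φ t| * ‖f t‖ ≤ 1 * ε :=
            mul_le_mul h1 (hsub t ht).le (norm_nonneg _) zero_le_one
        _ = ε := one_mul ε
  simpa [ZeroAtInftyContinuousMap.sub_apply] using key

end CesaroAux

open CesaroAux Set Metric

set_option maxHeartbeats 2000000 in
theorem cesaro_hyper_transitive_iff_weight_condition_C0
    {Ω : Type*} [TopologicalSpace Ω] [LocallyCompactSpace Ω] [T2Space Ω]
    [NoncompactSpace Ω]
    (α : Ω ≃ₜ Ω)
    (haper : ∀ K : Set Ω, IsCompact K →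
      ∃ N : ℕ, 0 < N ∧ ∀ n ≥ N, ((⇑α)^[n] '' K) ∩ K = ∅)
    (w : Ω → ℝ) (hw_cont : Continuous w) (hw_pos : ∀ t, 0 < w t)
    (hw_bdd : ∃ C, ∀ t, w t ≤ C) (hw_inv_bdd : ∃ C, ∀ t, (w t)⁻¹ ≤ C)
    (T S : C₀(Ω, ℂ) →L[ℂ] C₀(Ω, ℂ))
    (hT : ∀ (f : C₀(Ω, ℂ)) (t : Ω), T f t = (w t : ℂ) * f (α t))
    (hST : ∀ f, S (T f) = f) (hTS : ∀ f, T (S f) = f) :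
    IsCesaroHyperTransitive T ↔
      ∀ K : Set Ω, IsCompact K →
        ∃ n : ℕ → ℕ, StrictMono n ∧ (∀ k, 1 ≤ n k) ∧
          Tendsto (fun k =>
              sSup ((fun t => ((n k : ℝ))⁻¹ *
                ∏ j ∈ range (n k), w ((⇑α.symm)^[n k - j] t)) '' K))
            atTop (nhds 0) ∧
          Tendsto (fun k =>
              sSup ((fun t => (n k : ℝ) *
                ∏ j ∈ range (n k), (w ((⇑α)^[j] t))⁻¹) '' K))
            atTop (nhds 0) := by
  have hQ1 : ∀ (m : ℕ) (K : Set Ω),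
      ((fun t => ((m : ℝ))⁻¹ * ∏ j ∈ range m, w ((⇑α.symm)^[m - j] t)) '' K) =
        Q1 w α m '' K := fun m K => rfl
  have hQ2 : ∀ (m : ℕ) (K : Set Ω),
      ((fun t => (m : ℝ) * ∏ j ∈ range m, (w ((⇑α)^[j] t))⁻¹) '' K) =
        Q2 w α m '' K := fun m K => rfl
  simp only [hQ1, hQ2]
  constructor
  · -- hyper-transitive → weight condition
    intro hL K hK
    obtain ⟨φℝ, hφ1, -, hφc, hφ01⟩ :=
      exists_continuous_one_zero_of_isCompact hK isClosed_empty (Set.disjoint_empty K)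
    have hφcs : HasCompactSupport (fun t : Ω => ((φℝ t : ℝ) : ℂ)) :=
      hφc.comp_left (g := Complex.ofReal) (by simp)
    set φ : C₀(Ω, ℂ) := ⟨⟨fun t => ((φℝ t : ℝ) : ℂ), by fun_prop⟩, hφcs.is_zero_at_infty⟩
      with hφdef
    set L : Set Ω := tsupport ⇑φℝ with hLdef
    obtain ⟨N, hNpos, hdisj⟩ := haper (K ∪ L) (hK.union hφc)
    have hd : ∀ m ≥ N, ∀ u ∈ K ∪ L, (⇑α)^[m] u ∉ K ∪ L := by
      intro m hm u hu hcon
      have : (⇑α)^[m] u ∈ ((⇑α)^[m] '' (K ∪ L)) ∩ (K ∪ L) :=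
        ⟨Set.mem_image_of_mem _ hu, hcon⟩
      rw [hdisj m hm] at this
      exact this
    have claim : ∀ M k : ℕ, ∃ m : ℕ, M ≤ m ∧ 1 ≤ m ∧
        sSup (Q1 w α m '' K) ≤ 1 / ((k : ℝ) + 1) ∧
        sSup (Q2 w α m '' K) ≤ 1 / ((k : ℝ) + 1) := by
      intro M k
      set ε : ℝ := 1 / ((k : ℝ) + 1) with hεdef
      have hε : 0 < ε := by positivity
      set δ : ℝ := min ε 1 / 2 with hδdef
      have hδ0 : 0 < δ := by
        have : 0 < min ε 1 := lt_min hε one_pos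
        positivity
      have hδhalf : δ ≤ 1 / 2 := by
        rw [hδdef]
        have : min ε 1 ≤ 1 := min_le_right _ _
        linarith
      have hδ1 : δ < 1 := lt_of_le_of_lt hδhalf (by norm_num)
      have hδε : δ / (1 - δ) ≤ ε := by
        rw [div_le_iff₀ (by linarith)]
        have h1 : min ε 1 ≤ ε := min_le_left _ _
        nlinarith [hε.le, hδ0.le]
      obtain ⟨n', hmono', hone', hprop⟩ := hL (Metric.ball φ δ) (Metric.ball φ δ)
        Metric.isOpen_ball Metric.isOpen_ball
        ⟨φ, Metric.mem_ball_self hδ0⟩ ⟨φ, Metric.mem_ball_self hδ0⟩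
      set k₀ := max M N with hk₀def
      obtain ⟨f, hf, hg⟩ := hprop k₀
      set m := n' k₀ with hmdef
      have hk₀m : k₀ ≤ m := hmono'.le_apply
      have hmM : M ≤ m := le_trans (le_max_left _ _) hk₀m
      have hmN : N ≤ m := le_trans (le_max_right _ _) hk₀m
      have hm1 : 1 ≤ m := hone' k₀
      have hm0 : (0 : ℝ) < m := by exact_mod_cast hm1
      set g : C₀(Ω, ℂ) := ((m : ℂ))⁻¹ • (T ^ m) f with hgdef
      have hfp : ∀ t, ‖f t - φ t‖ < δ := by
        intro t
        have h1 : ‖(f - φ) t‖ ≤ ‖f - φ‖ := C0_norm_apply_le _ t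
        rw [ZeroAtInftyContinuousMap.sub_apply] at h1
        calc ‖f t - φ t‖ ≤ ‖f - φ‖ := h1
          _ < δ := by rwa [← dist_eq_norm]
      have hgp : ∀ t, ‖g t - φ t‖ < δ := by
        intro t
        have h1 : ‖(g - φ) t‖ ≤ ‖g - φ‖ := C0_norm_apply_le _ t
        rw [ZeroAtInftyContinuousMap.sub_apply] at h1
        calc ‖g t - φ t‖ ≤ ‖g - φ‖ := h1
          _ < δ := by rwa [← dist_eq_norm]
      have hφK : ∀ t ∈ K, φ t = 1 := by
        intro t ht
        have : φℝ t = 1 := hφ1 ht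
        simp [hφdef, this]
      have hφout : ∀ u, u ∉ L → φ u = 0 := by
        intro u hu
        have : φℝ u = 0 := image_eq_zero_of_notMem_tsupport hu
        simp [hφdef, this]
      -- bound for Q1
      have key₁ : ∀ t ∈ K, Q1 w α m t ≤ ε := by
        intro t ht
        set u : Ω := (⇑α.symm)^[m] t with hudef
        have hαu : (⇑α)^[m] u = t := iter_symm_apply α m t
        have huL : u ∉ K ∪ L := by
          intro hu
          exact hd m hmN u hu (by rw [hαu]; exact Or.inl ht)
        have hφu : φ u = 0 := hφout u (fun h => huL (Or.inr h))
        have hgu : g u = ((Q1 w α m t : ℝ) : ℂ) * f t := by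
          rw [hgdef, ZeroAtInftyContinuousMap.smul_apply, Tpow w α T hT m f u, hαu]
          have hprod : ∏ j ∈ range m, w ((⇑α)^[j] u) =
              ∏ j ∈ range m, w ((⇑α.symm)^[m - j] t) := by
            apply Finset.prod_congr rfl
            intro j hj
            rw [hudef, iter_comp α (le_of_lt (Finset.mem_range.mp hj)) t]
          rw [hprod, Q1_def]
          simp only [smul_eq_mul]
          push_cast
          ring
        have h1 : ‖g u‖ < δ := by
          have := hgp u
          rwa [hφu, sub_zero] at this
        have h2 : ‖g u‖ = Q1 w α m t * ‖f t‖ := by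
          rw [hgu, norm_mul, Complex.norm_real, Real.norm_eq_abs,
            abs_of_nonneg (Q1_nonneg w α hw_pos m t)]
        have h3 : 1 - δ < ‖f t‖ := by
          have h4 := hfp t
          have h5 : ‖φ t‖ = 1 := by rw [hφK t ht]; simp
          calc 1 - δ = ‖φ t‖ - δ := by rw [h5]
            _ < ‖φ t‖ - ‖f t - φ t‖ := by linarith
            _ ≤ ‖f t‖ := by
                have := abs_norm_sub_norm_le (f t) (φ t)
                rw [abs_le] at this
                linarith [this.1]
        have h6 : Q1 w α m t * (1 - δ) ≤ Q1 w α m t * ‖f t‖ :=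
          mul_le_mul_of_nonneg_left h3.le (Q1_nonneg w α hw_pos m t)
        have h7 : Q1 w α m t * (1 - δ) < δ := by rw [← h2] at h6; linarith
        calc Q1 w α m t ≤ δ / (1 - δ) := by
              rw [le_div_iff₀ (by linarith)]
              linarith
          _ ≤ ε := hδε
      -- bound for Q2
      have key₂ : ∀ t ∈ K, Q2 w α m t ≤ ε := by
        intro t ht
        set v : Ω := (⇑α)^[m] t with hvdef
        have hvL : v ∉ K ∪ L := hd m hmN t (Or.inl ht)
        have hφv : φ v = 0 := hφout v (fun h => hvL (Or.inr h))
        have hfv : ‖f v‖ < δ := by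
          have := hfp v
          rwa [hφv, sub_zero] at this
        set a : ℝ := ∏ j ∈ range m, w ((⇑α)^[j] t) with hadef
        have ha0 : 0 < a := Finset.prod_pos fun j _ => hw_pos _
        have hgt : g t = ((((m : ℝ))⁻¹ * a : ℝ) : ℂ) * f v := by
          rw [hgdef, ZeroAtInftyContinuousMap.smul_apply, Tpow w α T hT m f t, ← hvdef,
            ← hadef]
          simp only [smul_eq_mul]
          push_cast
          ring
        have h1 : 1 - δ < ‖g t‖ := by
          have h4 := hgp t
          have h5 : ‖φ t‖ = 1 := by rw [hφK t ht]; simp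
          calc 1 - δ = ‖φ t‖ - δ := by rw [h5]
            _ < ‖φ t‖ - ‖g t - φ t‖ := by linarith
            _ ≤ ‖g t‖ := by
                have := abs_norm_sub_norm_le (g t) (φ t)
                rw [abs_le] at this
                linarith [this.1]
        have h2 : ‖g t‖ = (m : ℝ)⁻¹ * a * ‖f v‖ := by
          rw [hgt, norm_mul, Complex.norm_real, Real.norm_eq_abs,
            abs_of_nonneg (by positivity)]
        have h3 : 1 - δ < (m : ℝ)⁻¹ * a * δ := by
          rw [h2] at h1
          have : (m : ℝ)⁻¹ * a * ‖f v‖ ≤ (m : ℝ)⁻¹ * a * δ :=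
            mul_le_mul_of_nonneg_left hfv.le (by positivity)
          linarith
        have hQ2eq : Q2 w α m t = (m : ℝ) * a⁻¹ := by
          rw [Q2_def, hadef, ← Finset.prod_inv_distrib]
        have hkey : (m : ℝ) * a⁻¹ * (1 - δ) < δ := by
          have hpos : (0 : ℝ) < (m : ℝ) * a⁻¹ := by positivity
          have hmul := mul_lt_mul_of_pos_left h3 hpos
          have hident : (m : ℝ) * a⁻¹ * ((m : ℝ)⁻¹ * a * δ) = δ := by
            field_simp
          rw [hident] at hmul
          exact hmul
        rw [hQ2eq]
        calc (m : ℝ) * a⁻¹ ≤ δ / (1 - δ) := by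
              rw [le_div_iff₀ (by linarith)]
              linarith
          _ ≤ ε := hδε
      refine ⟨m, hmM, hm1, ?_, ?_⟩
      · apply Real.sSup_le _ hε.le
        rintro x ⟨t, ht, rfl⟩
        exact key₁ t ht
      · apply Real.sSup_le _ hε.le
        rintro x ⟨t, ht, rfl⟩
        exact key₂ t ht
    -- build the sequence
    choose gg hg1 hg2 hg3 hg4 using claim
    set n : ℕ → ℕ := fun k => Nat.rec (gg 1 0) (fun k ih => gg (ih + 1) (k + 1)) k with hn
    have hsucc : ∀ k, n (k + 1) = gg (n k + 1) (k + 1) := fun k => rfl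
    have h1le : ∀ k, 1 ≤ n k := by
      intro k
      cases k with
      | zero => exact hg2 1 0
      | succ k => rw [hsucc]; exact hg2 _ _
    have hmono : StrictMono n := by
      apply strictMono_nat_of_lt_succ
      intro k
      have := hg1 (n k + 1) (k + 1)
      rw [hsucc]
      omega
    have hb : ∀ k, sSup (Q1 w α (n k) '' K) ≤ 1 / ((k : ℝ) + 1) ∧
        sSup (Q2 w α (n k) '' K) ≤ 1 / ((k : ℝ) + 1) := by
      intro k
      cases k with
      | zero => exact ⟨by rw [show n 0 = gg 1 0 from rfl]; simpa using hg3 1 0,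
          by rw [show n 0 = gg 1 0 from rfl]; simpa using hg4 1 0⟩
      | succ k =>
        constructor
        · rw [hsucc]
          have := hg3 (n k + 1) (k + 1)
          push_cast at this ⊢
          linarith
        · rw [hsucc]
          have := hg4 (n k + 1) (k + 1)
          push_cast at this ⊢
          linarith
    refine ⟨n, hmono, h1le, ?_, ?_⟩
    · apply squeeze_zero (fun k => sSup_Q1_nonneg w α hw_pos (n k) K) (fun k => (hb k).1)
        tendsto_one_div_add_atTop_nhds_zero_nat
    · apply squeeze_zero (fun k => sSup_Q2_nonneg w α hw_pos (n k) K) (fun k => (hb k).2)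
        tendsto_one_div_add_atTop_nhds_zero_nat
  · -- weight condition → hyper-transitive
    intro hR O₁ O₂ hO₁ hO₂ hO₁ne hO₂ne
    obtain ⟨f0, hf0⟩ := hO₁ne
    obtain ⟨g0, hg0⟩ := hO₂ne
    obtain ⟨ε₁, hε₁, hball₁⟩ := Metric.isOpen_iff.mp hO₁ f0 hf0
    obtain ⟨ε₂, hε₂, hball₂⟩ := Metric.isOpen_iff.mp hO₂ g0 hg0
    obtain ⟨f', hf'cs, hf'c⟩ := approx f0 (show (0:ℝ) < ε₁ / 4 by linarith)
    obtain ⟨g', hg'cs, hg'c⟩ := approx g0 (show (0:ℝ) < ε₂ / 4 by linarith)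
    set K : Set Ω := tsupport ⇑f' ∪ tsupport ⇑g' with hKdef
    have hK : IsCompact K := hf'cs.union hg'cs
    obtain ⟨n, hmono, hone, h1, h2⟩ := hR K hK
    have hbdd₁ : ∀ k, BddAbove (Q1 w α (n k) '' K) := fun k =>
      (hK.image (Q1_continuous w α hw_cont (n k))).bddAbove
    have hbdd₂ : ∀ k, BddAbove (Q2 w α (n k) '' K) := fun k =>
      (hK.image (Q2_continuous w α hw_cont hw_pos (n k))).bddAbove
    have hSn : ∀ k, ‖((n k : ℂ)) • (S ^ (n k)) g'‖ ≤ ‖g'‖ * sSup (Q2 w α (n k) '' K) :=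
      fun k => norm_smul_Spow w α hw_pos T S hT hTS (n k) g' K
        Set.subset_union_right (hbdd₂ k)
    have hTn : ∀ k, ‖((n k : ℂ))⁻¹ • (T ^ (n k)) f'‖ ≤ ‖f'‖ * sSup (Q1 w α (n k) '' K) :=
      fun k => norm_inv_Tpow w α hw_pos T hT (n k) f' K
        Set.subset_union_left (hbdd₁ k)
    have e1 : ∀ᶠ k in atTop, ‖g'‖ * sSup (Q2 w α (n k) '' K) < ε₁ / 4 := by
      have : Tendsto (fun k => ‖g'‖ * sSup (Q2 w α (n k) '' K)) atTop (nhds 0) := by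
        simpa using h2.const_mul ‖g'‖
      exact this.eventually_lt_const (by linarith)
    have e2 : ∀ᶠ k in atTop, ‖f'‖ * sSup (Q1 w α (n k) '' K) < ε₂ / 4 := by
      have : Tendsto (fun k => ‖f'‖ * sSup (Q1 w α (n k) '' K)) atTop (nhds 0) := by
        simpa using h1.const_mul ‖f'‖
      exact this.eventually_lt_const (by linarith)
    obtain ⟨k₀, hk₀⟩ := Filter.eventually_atTop.mp (e1.and e2)
    refine ⟨fun k => n (k₀ + k), hmono.comp (fun a b hab => by omega), fun k => hone _, ?_⟩
    intro k
    set m := n (k₀ + k) with hmdef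
    have hm1 : 1 ≤ m := hone _
    have hmC : (m : ℂ) ≠ 0 := Nat.cast_ne_zero.mpr (by omega)
    obtain ⟨hA, hB⟩ := hk₀ (k₀ + k) (Nat.le_add_right _ _)
    have hSn' := hSn (k₀ + k)
    have hTn' := hTn (k₀ + k)
    rw [← hmdef] at hA hB hSn' hTn'
    set h : C₀(Ω, ℂ) := f' + ((m : ℂ)) • (S ^ m) g' with hhdef
    have hmem₁ : h ∈ O₁ := by
      apply hball₁
      rw [Metric.mem_ball, dist_eq_norm]
      have heq : h - f0 = (f' - f0) + ((m : ℂ)) • (S ^ m) g' := by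
        rw [hhdef]; abel
      rw [heq]
      calc ‖(f' - f0) + ((m : ℂ)) • (S ^ m) g'‖
          ≤ ‖f' - f0‖ + ‖((m : ℂ)) • (S ^ m) g'‖ := norm_add_le _ _
        _ ≤ ε₁ / 4 + ‖g'‖ * sSup (Q2 w α m '' K) := by
            have hrev : ‖f' - f0‖ = ‖f0 - f'‖ := norm_sub_rev _ _
            rw [hrev]
            exact add_le_add hf'c hSn'
        _ < ε₁ / 4 + ε₁ / 4 := by linarith
        _ < ε₁ := by linarith
    refine ⟨h, hmem₁, ?_⟩
    apply hball₂
    rw [Metric.mem_ball, dist_eq_norm]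
    have hTh : ((m : ℂ))⁻¹ • (T ^ m) h = ((m : ℂ))⁻¹ • (T ^ m) f' + g' := by
      have e : (T ^ m) h = (T ^ m) f' + (m : ℂ) • g' := by
        rw [hhdef, map_add, map_smul, TSpow T S hTS m g']
      ext t
      rw [e]
      simp only [ZeroAtInftyContinuousMap.smul_apply, ZeroAtInftyContinuousMap.add_apply,
        smul_eq_mul]
      field_simp
    rw [hTh]
    have heq : (((m : ℂ))⁻¹ • (T ^ m) f' + g') - g0 =
        ((m : ℂ))⁻¹ • (T ^ m) f' + (g' - g0) := by abel
    rw [heq]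
    calc ‖((m : ℂ))⁻¹ • (T ^ m) f' + (g' - g0)‖
        ≤ ‖((m : ℂ))⁻¹ • (T ^ m) f'‖ + ‖g' - g0‖ := norm_add_le _ _
      _ ≤ ‖f'‖ * sSup (Q1 w α m '' K) + ε₂ / 4 := by
          have hrev : ‖g' - g0‖ = ‖g0 - g'‖ := norm_sub_rev _ _
          rw [hrev]
          exact add_le_add hTn' hg'c
      _ < ε₂ / 4 + ε₂ / 4 := by linarith
      _ < ε₂ := by linarith
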